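/- Let $n, k$ be positive integers with $\gcd(k,n)=1$ and let $F$ be a finite field with $2^n$ elements. Then there is no nonempty finite set $S$ of at most six distinct nonzero elements of $F$ such that $\sum_{x \in S} x = 0$, $\sum_{x \in S} x^{2^k+1} = 0$, and $\sum_{x \in S} x^{2^{2k}+1} = 0$. (Equivalently, the cyclic code of length $2^n-1$ with zero set $\{1, 2^k+1, 2^{2k}+1\}$ has minimum distance at least $7$, i.e., it is triple-error-correcting.) -/

import Mathlib

section prelim
variable {F : Type*} [Field F] [Fintype F]

lemma charF (n : ℕ) (hF : Fintype.card F = 2 ^ n) : CharP F 2 := by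
  obtain ⟨p, hc⟩ := CharP.exists F
  haveI := hc
  obtain ⟨m, hp, hcard⟩ := FiniteField.card F p
  have hdvd : p ∣ 2 ^ n := by
    rw [← hF, hcard]; exact dvd_pow_self p m.2.ne'
  have hp2 : p = 2 := by
    have h2 : p ∣ 2 := hp.dvd_of_dvd_pow hdvd
    have h3 := Nat.le_of_dvd (by norm_num) h2
    have := hp.two_le
    omega
  rwa [hp2] at hc

lemma pow_pow_mod (n : ℕ) (hF : Fintype.card F = 2 ^ n) (x : F) (t : ℕ) :
    x ^ 2 ^ t = x ^ 2 ^ (t % n) := by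
  conv_lhs => rw [← Nat.div_add_mod t n]
  rw [pow_add, pow_mul, pow_mul]
  congr 1
  rw [← hF]
  exact FiniteField.pow_card_pow (t / n) x

end prelim

section moore
variable {F : Type*} [Field F] [CharP F 2]

lemma moore (n : ℕ) (hn : 0 < n) (hq : ∀ x : F, x ^ 2 ^ n = x) :
    ∀ (d : ℕ) (b : Fin d → F)
      (_ : ∀ ε : Fin d → F, (∀ j, ε j = 0 ∨ ε j = 1) → ∑ j, ε j * b j = 0 → ∀ j, ε j = 0)
      (lam : Fin d → F) (_ : ∀ t : ℕ, ∑ j, lam j * b j ^ 2 ^ t = 0),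
      ∀ j, lam j = 0 := by
  intro d
  induction d with
  | zero => intro b hb lam h j; exact absurd j.2 (by omega)
  | succ d IH =>
    intro b hb lam hA
    classical
    have key : ∀ s : ℕ, (∑ j, lam j * b j ^ 2 ^ s) ^ 2
        = ∑ j, lam j ^ 2 * b j ^ (2 ^ s * 2) := by
      intro s
      rw [sum_pow_char]
      exact Finset.sum_congr rfl fun j _ => by rw [mul_pow, pow_mul]
    have hB : ∀ t : ℕ, ∑ j, lam j ^ 2 * b j ^ 2 ^ t = 0 := by
      intro t
      cases t with
      | zero =>
        have h1 := key (n - 1)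
        have h2 : (2:ℕ) ^ (n - 1) * 2 = 2 ^ n := by rw [← pow_succ]; congr 1; omega
        rw [hA (n - 1), h2] at h1
        have h3 : ∑ j, lam j ^ 2 * b j ^ (2:ℕ) ^ (0:ℕ)
            = ∑ j, lam j ^ 2 * b j ^ (2:ℕ) ^ n :=
          Finset.sum_congr rfl fun j _ => by rw [pow_zero, pow_one, hq]
        rw [h3, ← h1, zero_pow]; norm_num
      | succ t =>
        have h1 := key t
        rw [hA t] at h1
        rw [pow_succ, ← h1, zero_pow]; norm_num
    set μ : Fin (d+1) → F := fun j => lam 0 * lam j ^ 2 + lam 0 ^ 2 * lam j with hμdef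
    -- tail independence
    have hbtail : ∀ ε : Fin d → F, (∀ j, ε j = 0 ∨ ε j = 1) →
        ∑ j, ε j * b j.succ = 0 → ∀ j, ε j = 0 := by
      intro ε hε hsum j
      set ε' : Fin (d+1) → F := Fin.cons (0:F) ε with hε'def
      have h01 : ∀ i : Fin (d+1), ε' i = 0 ∨ ε' i = 1 := by
        intro i
        induction i using Fin.cases with
        | zero => left; simp [hε'def]
        | succ i => rw [hε'def, Fin.cons_succ]; exact hε i
      have hsum' : ∑ i, ε' i * b i = 0 := by
        rw [Fin.sum_univ_succ]
        rw [show ε' 0 = 0 from by simp [hε'def], zero_mul, zero_add]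
        rw [show ∑ i : Fin d, ε' i.succ * b i.succ
              = ∑ i : Fin d, ε i * b i.succ from
            Finset.sum_congr rfl fun i _ => by rw [hε'def, Fin.cons_succ]]
        exact hsum
      have := hb ε' h01 hsum' j.succ
      rw [hε'def, Fin.cons_succ] at this
      exact this
    have hC : ∀ t : ℕ, ∑ j : Fin d, μ j.succ * (b j.succ) ^ 2 ^ t = 0 := by
      intro t
      have hfull : ∑ j : Fin (d+1), μ j * b j ^ 2 ^ t = 0 := by
        have e1 : ∑ j : Fin (d+1), μ j * b j ^ 2 ^ t
            = lam 0 * ∑ j, lam j ^ 2 * b j ^ 2 ^ t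
              + lam 0 ^ 2 * ∑ j, lam j * b j ^ 2 ^ t := by
          rw [Finset.mul_sum, Finset.mul_sum, ← Finset.sum_add_distrib]
          exact Finset.sum_congr rfl fun j _ => by simp only [hμdef]; ring
        rw [e1, hA t, hB t]; ring
      rw [Fin.sum_univ_succ] at hfull
      have hμ0 : μ 0 = 0 := by
        have : lam 0 * lam 0 ^ 2 + lam 0 ^ 2 * lam 0
            = lam 0 ^ 3 + lam 0 ^ 3 := by ring
        simp only [hμdef, this, CharTwo.add_self_eq_zero]
      rwa [hμ0, zero_mul, zero_add] at hfull
    have hμtail : ∀ j : Fin d, μ j.succ = 0 :=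
      IH (fun j => b j.succ) hbtail (fun j => μ j.succ) hC
    by_cases hl0 : lam 0 = 0
    · have hAt : ∀ t, ∑ j : Fin d, lam j.succ * b j.succ ^ 2 ^ t = 0 := by
        intro t
        have := hA t
        rwa [Fin.sum_univ_succ, hl0, zero_mul, zero_add] at this
      have htail := IH (fun j => b j.succ) hbtail (fun j => lam j.succ) hAt
      intro j; exact Fin.cases hl0 htail j
    · exfalso
      have hcases : ∀ j : Fin (d+1), lam j = 0 ∨ lam j = lam 0 := by
        intro j
        refine Fin.cases (Or.inr rfl) (fun i => ?_) j
        have h := hμtail i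
        have h2 : lam 0 * (lam i.succ * (lam i.succ + lam 0)) = 0 := by
          rw [← h]; simp only [hμdef]; ring
        rcases mul_eq_zero.mp h2 with h3 | h3
        · exact absurd h3 hl0
        rcases mul_eq_zero.mp h3 with h4 | h4
        · exact Or.inl h4
        · right
          have := CharTwo.add_self_eq_zero (R := F) (lam 0)
          -- lam i.succ + lam 0 = 0 = lam 0 + lam 0
          have h5 : lam i.succ + lam 0 = lam 0 + lam 0 := by rw [h4, this]
          exact add_right_cancel h5
      set ε : Fin (d+1) → F := fun j => if lam j = lam 0 then 1 else 0 with hεdef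
      have hε01 : ∀ j, ε j = 0 ∨ ε j = 1 := by
        intro j; by_cases h : lam j = lam 0 <;> simp [hεdef, h]
      have hterm : ∀ j, lam j * b j = lam 0 * (ε j * b j) := by
        intro j
        rcases hcases j with h | h
        · have hne : lam j ≠ lam 0 := by rw [h]; exact fun hc => hl0 hc.symm
          rw [hεdef]; simp only [h]
          rw [if_neg (fun hc => hl0 hc.symm), zero_mul, mul_zero]
        · simp [hεdef, h]
      have h0 := hA 0
      have e2 : ∑ j, lam j * b j ^ (2:ℕ) ^ (0:ℕ) = lam 0 * ∑ j, ε j * b j := by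
        rw [Finset.mul_sum]
        exact Finset.sum_congr rfl fun j _ => by rw [pow_zero, pow_one, hterm j]
      rw [e2] at h0
      have hsum0 : ∑ j, ε j * b j = 0 := by
        rcases mul_eq_zero.mp h0 with h | h
        · exact absurd h hl0
        · exact h
      have := hb ε hε01 hsum0 0
      simp [hεdef] at this

end moore

section lemA
variable {F : Type*} [Field F] [Fintype F]

lemma lemA (n k : ℕ) (hn : 0 < n) (hk : 0 < k) (hgcd : Nat.gcd k n = 1)
    (hF : Fintype.card F = 2 ^ n) (S : Finset F) (hcard : S.card ≤ 6) (hne : S.Nonempty)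
    (h0 : ∑ x ∈ S, x = 0) (h1 : ∑ x ∈ S, x ^ (2 ^ k + 1) = 0)
    (h2 : ∑ x ∈ S, x ^ (2 ^ (2 * k) + 1) = 0) :
    ∀ t : ℕ, ∑ x ∈ S, x ^ (2 ^ t + 1) = 0 := by
  haveI : CharP F 2 := charF n hF
  classical
  set c : ℕ → F := fun i => ∑ x ∈ S, x ^ (2 ^ (k * i) + 1) with hcdef
  have hIP : ∀ a b : ℕ, a ≤ b →
      ∑ x ∈ S, x ^ 2 ^ (k * a) * x ^ 2 ^ (k * b) = c (b - a) ^ 2 ^ (k * a) := by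
    intro a b hab
    rw [hcdef]
    rw [sum_pow_char_pow]
    refine Finset.sum_congr rfl fun x _ => ?_
    rw [← pow_mul]
    have he : (2 ^ (k * (b - a)) + 1) * 2 ^ (k * a) = 2 ^ (k * b) + 2 ^ (k * a) := by
      rw [add_mul, one_mul, ← pow_add]
      congr 2
      have : k * (b - a) + k * a = k * b := by
        rw [← Nat.mul_add, Nat.sub_add_cancel hab]
      omega
    rw [he, pow_add]
    ring
  have hcm : ∀ m : ℕ, c m = 0 := by
    intro m
    induction m using Nat.strong_induction_on with
    | _ m IH =>
    rcases show m = 0 ∨ m = 1 ∨ m = 2 ∨ 3 ≤ m by omega with rfl | rfl | rfl | hm3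
    · -- c 0 = (∑ x)^2
      have : c 0 = (∑ x ∈ S, x) ^ (2:ℕ) := by
        rw [hcdef, sum_pow_char]
        exact Finset.sum_congr rfl fun x _ => by norm_num
      rw [this, h0, zero_pow]; norm_num
    · show (∑ x ∈ S, x ^ (2 ^ (k * 1) + 1)) = 0
      rw [mul_one]; exact h1
    · show (∑ x ∈ S, x ^ (2 ^ (k * 2) + 1)) = 0
      rw [show k * 2 = 2 * k by ring]
      exact h2
    by_contra hm
    set M := 2 * m + 1 with hMdef
    set f' : ℕ → F → F := fun a x => if a = 2 * m then 1 else x ^ 2 ^ (k * a) with hf'def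
    set I : ℕ → ℕ → F := fun a b => ∑ x ∈ S, f' a x * x ^ 2 ^ (k * b) with hIdef
    have hI2m : ∀ b, I (2 * m) b = 0 := by
      intro b
      have e1 : I (2 * m) b = ∑ x ∈ S, x ^ 2 ^ (k * b) := by
        refine Finset.sum_congr rfl fun x _ => ?_
        show (if 2*m = 2*m then (1:F) else x ^ 2 ^ (k*(2*m))) * x ^ 2 ^ (k*b) = x ^ 2 ^ (k*b)
        rw [if_pos rfl, one_mul]
      rw [e1, ← sum_pow_char_pow, h0, zero_pow (Nat.pos_of_ne_zero (by positivity)).ne']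
    have hIa : ∀ a b : ℕ, a ≤ b → a ≠ 2 * m → I a b = c (b - a) ^ 2 ^ (k * a) := by
      intro a b hab hane
      have e1 : I a b = ∑ x ∈ S, x ^ 2 ^ (k * a) * x ^ 2 ^ (k * b) := by
        refine Finset.sum_congr rfl fun x _ => ?_
        show (if a = 2*m then (1:F) else x ^ 2 ^ (k*a)) * x ^ 2 ^ (k*b) = _
        rw [if_neg hane]
      rw [e1, hIP a b hab]
    have hIb : ∀ a b : ℕ, b ≤ a → a ≠ 2 * m → I a b = c (a - b) ^ 2 ^ (k * b) := by
      intro a b hab hane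
      have e1 : I a b = ∑ x ∈ S, x ^ 2 ^ (k * b) * x ^ 2 ^ (k * a) := by
        refine Finset.sum_congr rfl fun x _ => ?_
        show (if a = 2*m then (1:F) else x ^ 2 ^ (k*a)) * x ^ 2 ^ (k*b) = _
        rw [if_neg hane, mul_comm]
      rw [e1, hIP b a hab]
    have hczpow : ∀ i e : ℕ, i < m → c i ^ 2 ^ e = 0 := by
      intro i e hi
      rw [IH i hi, zero_pow (Nat.pos_of_ne_zero (by positivity)).ne']
    -- the injective map
    set Φ : (Fin M → F) → (↥S → F) := fun g x =>
      ∑ a ∈ Finset.range M, (if h : a < M then g ⟨a, h⟩ else 0) * f' a (x : F) with hΦdef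
    have hinj : Function.Injective Φ := by
      intro g1 g2 hgg
      set g' : ℕ → F := fun a => if h : a < M then g1 ⟨a, h⟩ - g2 ⟨a, h⟩ else 0 with hg'def
      have hg : ∀ x ∈ S, ∑ a ∈ Finset.range M, g' a * f' a x = 0 := by
        intro x hx
        have hx1 := congrFun hgg ⟨x, hx⟩
        simp only [hΦdef] at hx1
        have : ∑ a ∈ Finset.range M, g' a * f' a x
            = (∑ a ∈ Finset.range M, (if h : a < M then g1 ⟨a, h⟩ else 0) * f' a x)
              - ∑ a ∈ Finset.range M, (if h : a < M then g2 ⟨a, h⟩ else 0) * f' a x := by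
          rw [← Finset.sum_sub_distrib]
          refine Finset.sum_congr rfl fun a ha => ?_
          have haM : a < M := Finset.mem_range.mp ha
          rw [hg'def]
          simp only [dif_pos haM]
          ring
        rw [this, hx1, sub_self]
      have hP : ∀ b : ℕ, ∑ a ∈ Finset.range M, g' a * I a b = 0 := by
        intro b
        have e1 : ∑ a ∈ Finset.range M, g' a * I a b
            = ∑ x ∈ S, (∑ a ∈ Finset.range M, g' a * f' a x) * x ^ 2 ^ (k * b) := by
          calc ∑ a ∈ Finset.range M, g' a * I a b
              = ∑ a ∈ Finset.range M, ∑ x ∈ S, g' a * f' a x * x ^ 2 ^ (k*b) := by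
                refine Finset.sum_congr rfl fun a _ => ?_
                simp only [hIdef, Finset.mul_sum]
                exact Finset.sum_congr rfl fun x _ => by ring
            _ = ∑ x ∈ S, ∑ a ∈ Finset.range M, g' a * f' a x * x ^ 2 ^ (k*b) :=
                Finset.sum_comm
            _ = ∑ x ∈ S, (∑ a ∈ Finset.range M, g' a * f' a x) * x ^ 2 ^ (k*b) := by
                refine Finset.sum_congr rfl fun x _ => ?_
                rw [Finset.sum_mul]
        rw [e1]
        rw [Finset.sum_congr rfl fun x hx => by rw [hg x hx, zero_mul]]
        exact Finset.sum_const_zero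
      have hS1 : ∀ j, j < m → g' j = 0 := by
        intro j
        induction j using Nat.strong_induction_on with
        | _ j IHj =>
        intro hjm
        have hsingle : ∑ a ∈ Finset.range M, g' a * I a (m + j) = g' j * I j (m + j) := by
          refine Finset.sum_eq_single_of_mem j (Finset.mem_range.mpr (by omega)) ?_
          intro a ha hne'
          have haM : a < M := Finset.mem_range.mp ha
          by_cases h2m : a = 2 * m
          · rw [h2m, hI2m, mul_zero]
          by_cases haj : a < j
          · rw [IHj a haj (by omega), zero_mul]
          have haj' : j < a := by omega
          by_cases hab : a ≤ m + j
          · rw [hIa a (m + j) hab h2m, hczpow _ _ (by omega), mul_zero]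
          · rw [hIb a (m + j) (by omega) h2m, hczpow _ _ (by omega), mul_zero]
        have hone := hP (m + j)
        rw [hsingle] at hone
        have hIj : I j (m + j) = c m ^ 2 ^ (k * j) := by
          rw [hIa j (m + j) (by omega) (by omega)]
          congr 2
          omega
        rw [hIj] at hone
        exact (mul_eq_zero.mp hone).resolve_right (pow_ne_zero _ hm)
      have hS2 : ∀ j, j < m → g' (2 * m - 1 - j) = 0 := by
        intro j
        induction j using Nat.strong_induction_on with
        | _ j IHj =>
        intro hjm
        have hsingle : ∑ a ∈ Finset.range M, g' a * I a (m - 1 - j)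
            = g' (2 * m - 1 - j) * I (2 * m - 1 - j) (m - 1 - j) := by
          refine Finset.sum_eq_single_of_mem _ (Finset.mem_range.mpr (by omega)) ?_
          intro a ha hne'
          have haM : a < M := Finset.mem_range.mp ha
          by_cases h2m : a = 2 * m
          · rw [h2m, hI2m, mul_zero]
          by_cases halt : a < 2 * m - 1 - j
          · by_cases hab : a ≤ m - 1 - j
            · rw [hIa a (m - 1 - j) hab h2m, hczpow _ _ (by omega), mul_zero]
            · rw [hIb a (m - 1 - j) (by omega) h2m, hczpow _ _ (by omega), mul_zero]
          · have hj' : 2 * m - 1 - (2 * m - 1 - a) = a := by omega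
            rw [← hj', IHj (2 * m - 1 - a) (by omega) (by omega), zero_mul]
        have hone := hP (m - 1 - j)
        rw [hsingle] at hone
        have hIj : I (2 * m - 1 - j) (m - 1 - j) = c m ^ 2 ^ (k * (m - 1 - j)) := by
          rw [hIb (2 * m - 1 - j) (m - 1 - j) (by omega) (by omega)]
          congr 2
          omega
        rw [hIj] at hone
        exact (mul_eq_zero.mp hone).resolve_right (pow_ne_zero _ hm)
      have hSall : ∀ a, a < 2 * m → g' a = 0 := by
        intro a ha
        by_cases h : a < m
        · exact hS1 a h
        · have he : a = 2 * m - 1 - (2 * m - 1 - a) := by omega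
          rw [he]
          exact hS2 (2 * m - 1 - a) (by omega)
      have hg2m : g' (2 * m) = 0 := by
        obtain ⟨x₀, hx₀⟩ := hne
        have hone := hg x₀ hx₀
        have hsingle : ∑ a ∈ Finset.range M, g' a * f' a x₀ = g' (2 * m) * f' (2 * m) x₀ := by
          refine Finset.sum_eq_single_of_mem _ (Finset.mem_range.mpr (by omega)) ?_
          intro a ha hne'
          have haM : a < M := Finset.mem_range.mp ha
          rw [hSall a (by omega), zero_mul]
        rw [hsingle] at hone
        have hf1 : f' (2 * m) x₀ = 1 := if_pos rfl
        rw [hf1, mul_one] at hone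
        exact hone
      funext a
      have haM : (a : ℕ) < M := a.2
      have hga : g' a.val = 0 := by
        by_cases h : (a : ℕ) < 2 * m
        · exact hSall _ h
        · have he : (a : ℕ) = 2 * m := by omega
          rw [he]
          exact hg2m
      rw [hg'def] at hga
      simp only [dif_pos haM] at hga
      have h5 := sub_eq_zero.mp hga
      simpa using h5
    have hcard2 := Fintype.card_le_of_injective Φ hinj
    have hc1 : Fintype.card (Fin M → F) = Fintype.card F ^ M := by
      rw [Fintype.card_fun, Fintype.card_fin]
    have hc2 : Fintype.card (↥S → F) = Fintype.card F ^ S.card := by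
      rw [Fintype.card_fun, Fintype.card_coe]
    rw [hc1, hc2] at hcard2
    have hFlt : 1 < Fintype.card F := Fintype.one_lt_card
    have hM6 : M ≤ S.card := (Nat.pow_le_pow_iff_right hFlt).mp hcard2
    omega
  intro t
  haveI : NeZero n := ⟨hn.ne'⟩
  have hcop : Nat.Coprime k n := hgcd
  set u := ZMod.unitOfCoprime k hcop with hu
  set z : ZMod n := ((u⁻¹ : (ZMod n)ˣ) : ZMod n) * (t : ZMod n) with hz
  set m := z.val with hmd
  have hmod : (k * m) % n = t % n := by
    have hcast : ((k * m : ℕ) : ZMod n) = ((t : ℕ) : ZMod n) := by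
      push_cast
      rw [hmd, ZMod.natCast_val, ZMod.cast_id, hz, ← mul_assoc]
      have hku : (k : ZMod n) = (u : ZMod n) := (ZMod.coe_unitOfCoprime k hcop).symm
      rw [hku, ← Units.val_mul, mul_inv_cancel, Units.val_one, one_mul]
    exact (ZMod.natCast_eq_natCast_iff _ _ _).mp hcast
  calc ∑ x ∈ S, x ^ (2 ^ t + 1) = ∑ x ∈ S, x ^ (2 ^ (k * m) + 1) := by
        refine Finset.sum_congr rfl fun x _ => ?_
        rw [pow_add, pow_add, pow_one]
        congr 1
        rw [pow_pow_mod n hF x t, pow_pow_mod n hF x (k * m), hmod]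
    _ = 0 := hcm m

end lemA


lemma lemF (d : ℕ) (ι : Type*) [Fintype ι] [DecidableEq ι]
    (hc1 : 1 ≤ Fintype.card ι) (hc6 : Fintype.card ι ≤ 6)
    (r : ι → Fin d → ZMod 2)
    (hinj : Function.Injective r) (hnz : ∀ i, r i ≠ 0)
    (hspan : Submodule.span (ZMod 2) (Set.range r) = ⊤)
    (hM : ∀ j l : Fin d, ∑ i, r i j * r i l = 0) : False := by
  classical
  set w := Fintype.card ι with hw
  -- the linear map given by the matrix
  set L : (ι → ZMod 2) →ₗ[ZMod 2] (Fin d → ZMod 2) :=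
    { toFun := fun v j => ∑ i, v i * r i j
      map_add' := by
        intro v1 v2; funext j
        simp only [Pi.add_apply, add_mul]
        rw [Finset.sum_add_distrib]
      map_smul' := by
        intro cc v; funext j
        simp only [Pi.smul_apply, smul_eq_mul, RingHom.id_apply, Finset.mul_sum, mul_assoc] } with hL
  have hLsingle : ∀ i, L (Pi.single i 1) = r i := by
    intro i; funext j
    show (∑ i', (Pi.single i 1 : ι → ZMod 2) i' * r i' j) = r i j
    rw [Finset.sum_eq_single i]
    · rw [Pi.single_eq_same, one_mul]
    · intro i' _ hne
      rw [Pi.single_eq_of_ne hne, zero_mul]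
    · intro h; exact absurd (Finset.mem_univ i) h
  have hLsurj : LinearMap.range L = ⊤ := by
    rw [← top_le_iff, ← hspan, Submodule.span_le]
    rintro _ ⟨i, rfl⟩
    exact ⟨Pi.single i 1, hLsingle i⟩
  have hcol : ∀ j : Fin d, (fun i => r i j) ∈ LinearMap.ker L := by
    intro j
    rw [LinearMap.mem_ker]
    funext l
    exact hM j l
  have hcolind : LinearIndependent (ZMod 2) (fun (j : Fin d) (i : ι) => r i j) := by
    rw [Fintype.linearIndependent_iff]
    intro g hg j
    have hrow : ∀ i, ∑ j', g j' * r i j' = 0 := by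
      intro i
      have := congrFun hg i
      simpa using this
    set φ : (Fin d → ZMod 2) →ₗ[ZMod 2] ZMod 2 :=
      { toFun := fun u => ∑ j', g j' * u j'
        map_add' := by
          intro u1 u2
          simp only [Pi.add_apply, mul_add]
          rw [Finset.sum_add_distrib]
        map_smul' := by
          intro cc u
          simp only [Pi.smul_apply, smul_eq_mul, RingHom.id_apply, Finset.mul_sum]
          exact Finset.sum_congr rfl fun j' _ => by ring } with hφ
    have hφtop : ∀ u, φ u = 0 := by
      have hker : (⊤ : Submodule (ZMod 2) (Fin d → ZMod 2)) ≤ LinearMap.ker φ := by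
        rw [← hspan, Submodule.span_le]
        rintro _ ⟨i, rfl⟩
        rw [SetLike.mem_coe, LinearMap.mem_ker]
        exact hrow i
      intro u
      have := hker (Submodule.mem_top (x := u))
      rwa [LinearMap.mem_ker] at this
    have := hφtop (Pi.single j 1)
    rw [hφ] at this
    simp only [LinearMap.coe_mk, AddHom.coe_mk] at this
    rw [Finset.sum_eq_single j] at this
    · rwa [Pi.single_eq_same, mul_one] at this
    · intro j' _ hne
      rw [Pi.single_eq_of_ne hne, mul_zero]
    · intro h; exact absurd (Finset.mem_univ j) h
  -- rank-nullity
  have hrank := LinearMap.finrank_range_add_finrank_ker L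
  rw [hLsurj, finrank_top, Module.finrank_pi, Module.finrank_pi] at hrank
  rw [Fintype.card_fin] at hrank
  have hdker : d ≤ Module.finrank (ZMod 2) (LinearMap.ker L) := by
    have hind2 : LinearIndependent (ZMod 2)
        (fun j : Fin d => (⟨fun i => r i j, hcol j⟩ : LinearMap.ker L)) := by
      apply LinearIndependent.of_comp (LinearMap.ker L).subtype
      exact hcolind
    simpa using hind2.fintype_card_le_finrank
  have h2d : 2 * d ≤ w := by omega
  -- injectivity into nonzero vectors
  have hwle : w ≤ 2 ^ d - 1 := by
    have hinj2 : Function.Injective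
        (fun i => (⟨r i, hnz i⟩ : {v : Fin d → ZMod 2 // v ≠ 0})) := by
      intro i1 i2 h
      exact hinj (congrArg Subtype.val h)
    have hcle := Fintype.card_le_of_injective _ hinj2
    have hcs : Fintype.card {v : Fin d → ZMod 2 // v ≠ 0} = 2 ^ d - 1 := by
      rw [Fintype.card_subtype_compl]
      rw [Fintype.card_subtype_eq (0 : Fin d → ZMod 2)]
      rw [Fintype.card_fun, Fintype.card_fin, ZMod.card]
    rw [hcs] at hcle
    exact hcle
  have hd3 : d ≤ 3 := by omega
  have h2dpow : (2:ℕ) ^ d ≤ 8 := by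
    calc (2:ℕ)^d ≤ 2^3 := Nat.pow_le_pow_right (by norm_num) hd3
    _ = 8 := by norm_num
  have hd3' : d = 3 ∧ w = 6 := by
    interval_cases d <;> simp_all <;> omega
  obtain ⟨rfl, hw6⟩ := hd3'
  -- final counting argument in (Fin 3 → ZMod 2)
  set U : Finset (Fin 3 → ZMod 2) := Finset.univ.image r with hU
  have hUcard : U.card = 6 := by
    rw [hU, Finset.card_image_of_injective _ hinj, Finset.card_univ, ← hw, hw6]
  set NZ : Finset (Fin 3 → ZMod 2) := Finset.univ.erase 0 with hNZ
  have hsub : U ⊆ NZ := by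
    intro v hv
    rw [hU] at hv
    obtain ⟨i, _, rfl⟩ := Finset.mem_image.mp hv
    exact Finset.mem_erase.mpr ⟨hnz i, Finset.mem_univ _⟩
  have hNZcard : NZ.card = 7 := by
    rw [hNZ, Finset.card_erase_of_mem (Finset.mem_univ _), Finset.card_univ]
    rw [Fintype.card_fun, Fintype.card_fin, ZMod.card]
    norm_num
  have hsd : (NZ \ U).card = 1 := by
    rw [Finset.card_sdiff_of_subset hsub, hNZcard, hUcard]
  obtain ⟨ρ, hρ⟩ := Finset.card_eq_one.mp hsd
  have hρmem : ρ ∈ NZ \ U := by rw [hρ]; exact Finset.mem_singleton_self ρ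
  have hρnz : ρ ≠ 0 := (Finset.mem_erase.mp (Finset.mem_sdiff.mp hρmem).1).1
  have hNZsum : ∀ j : Fin 3, ∑ v ∈ NZ, v j = 0 := by decide
  have hUsum : ∀ j : Fin 3, ∑ v ∈ U, v j = 0 := by
    intro j
    rw [hU, Finset.sum_image (fun i1 _ i2 _ h => hinj h)]
    have hxx : ∀ x : ZMod 2, x * x = x := by decide
    calc ∑ i, r i j = ∑ i, r i j * r i j := by
          exact Finset.sum_congr rfl fun i _ => (hxx (r i j)).symm
      _ = 0 := hM j j
  have hfin : ∀ j : Fin 3, ρ j = 0 := by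
    intro j
    have := Finset.sum_sdiff (f := fun v => v j) hsub
    rw [hρ, Finset.sum_singleton, hNZsum j, hUsum j, add_zero] at this
    exact this
  exact hρnz (funext hfin)


theorem stmt_0 (n k : ℕ) (hn : 0 < n) (hk : 0 < k) (hgcd : Nat.gcd k n = 1)
    (F : Type*) [Field F] [Fintype F] (hF : Fintype.card F = 2 ^ n) :
    ¬ ∃ S : Finset F, S.Nonempty ∧ S.card ≤ 6 ∧ (0 : F) ∉ S ∧
      ∑ x ∈ S, x = 0 ∧
      ∑ x ∈ S, x ^ (2 ^ k + 1) = 0 ∧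
      ∑ x ∈ S, x ^ (2 ^ (2 * k) + 1) = 0 := by
  rintro ⟨S, hne, hcard, h0S, h0, h1, h2⟩
  haveI hchar : CharP F 2 := charF n hF
  classical
  have hA : ∀ t : ℕ, ∑ x ∈ S, x ^ (2 ^ t + 1) = 0 :=
    lemA n k hn hk hgcd hF S hcard hne h0 h1 h2
  have hq : ∀ x : F, x ^ 2 ^ n = x := by
    intro x; rw [← hF]; exact FiniteField.pow_card x
  letI : Algebra (ZMod 2) F := ZMod.algebra F 2
  set V : Submodule (ZMod 2) F := Submodule.span (ZMod 2) (S : Set F) with hV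
  set d : ℕ := Module.finrank (ZMod 2) V with hd
  set b : Module.Basis (Fin d) (ZMod 2) V := Module.finBasis (ZMod 2) V with hb
  set B : Fin d → F := fun j => (b j : F) with hB
  have hZ01 : ∀ cc : ZMod 2, cc = 0 ∨ cc = 1 := by decide
  -- ZMod-coefficient independence of B in F
  have hBindZ : ∀ ε : Fin d → ZMod 2, ∑ j, ε j • B j = 0 → ∀ j, ε j = 0 := by
    intro ε hsum
    have hcoe : ((∑ j, ε j • b j : V) : F) = ∑ j, ε j • B j := by
      rw [AddSubmonoidClass.coe_finset_sum]
      rfl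
    have hzero : (∑ j, ε j • b j : V) = 0 := by
      have h9 : ((∑ j, ε j • b j : V) : F) = ((0 : V) : F) := by
        rw [hcoe, hsum]
        rfl
      exact Subtype.coe_injective h9
    have hli := b.linearIndependent
    rw [Fintype.linearIndependent_iff] at hli
    exact hli ε hzero
  -- F-coefficient {0,1} independence
  have hBindF : ∀ ε : Fin d → F, (∀ j, ε j = 0 ∨ ε j = 1) →
      ∑ j, ε j * B j = 0 → ∀ j, ε j = 0 := by
    intro ε hε hsum j
    set ε' : Fin d → ZMod 2 := fun j => if ε j = 1 then 1 else 0 with hε'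
    have hsum' : ∑ j, ε' j • B j = ∑ j, ε j * B j := by
      refine Finset.sum_congr rfl fun i _ => ?_
      rcases hε i with h | h
      · have : ε i ≠ 1 := by rw [h]; exact zero_ne_one
        rw [hε']
        simp only [if_neg this]
        rw [zero_smul, h, zero_mul]
      · rw [hε']
        simp only [if_pos h]
        rw [one_smul, h, one_mul]
    have h := hBindZ ε' (by rw [hsum', hsum]) j
    rcases hε j with h0' | h1'
    · exact h0'
    · exfalso
      rw [hε'] at h
      simp only [if_pos h1'] at h
      exact one_ne_zero h
  have hmemV : ∀ x ∈ S, x ∈ V := fun x hx => Submodule.subset_span hx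
  set r : {x // x ∈ S} → Fin d → ZMod 2 :=
    fun x j => b.repr ⟨x.1, hmemV x.1 x.2⟩ j with hr
  have hxrepr : ∀ x : {x // x ∈ S}, (x : F) = ∑ j, r x j • B j := by
    intro x
    have hs := b.sum_repr ⟨x.1, hmemV x.1 x.2⟩
    have hc := congrArg V.subtype hs
    rw [map_sum] at hc
    exact hc.symm
  -- lam
  set lam : Fin d → F := fun j => ∑ x ∈ S.attach, r x j • (x : F) with hlam
  have hlamrel : ∀ t : ℕ, ∑ j, lam j * B j ^ 2 ^ t = 0 := by
    intro t
    have e1 : ∑ j, lam j * B j ^ 2 ^ t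
        = ∑ x ∈ S.attach, (x : F) * ∑ j, r x j • B j ^ 2 ^ t := by
      calc ∑ j, lam j * B j ^ 2 ^ t
          = ∑ j, ∑ x ∈ S.attach, (x : F) * (r x j • B j ^ 2 ^ t) := by
            refine Finset.sum_congr rfl fun j _ => ?_
            rw [hlam]
            rw [Finset.sum_mul]
            refine Finset.sum_congr rfl fun x _ => ?_
            rw [smul_mul_assoc, mul_smul_comm]
        _ = ∑ x ∈ S.attach, ∑ j, (x : F) * (r x j • B j ^ 2 ^ t) := Finset.sum_comm
        _ = ∑ x ∈ S.attach, (x : F) * ∑ j, r x j • B j ^ 2 ^ t := by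
            refine Finset.sum_congr rfl fun x _ => ?_
            rw [Finset.mul_sum]
    have e2 : ∀ x : {x // x ∈ S}, ∑ j, r x j • B j ^ 2 ^ t = (x : F) ^ 2 ^ t := by
      intro x
      conv_rhs => rw [hxrepr x]
      rw [sum_pow_char_pow]
      refine Finset.sum_congr rfl fun j _ => ?_
      rcases hZ01 (r x j) with h | h
      · rw [h, zero_smul, zero_smul, zero_pow (Nat.pos_of_ne_zero (by positivity)).ne']
      · rw [h, one_smul, one_smul]
    rw [e1]
    have e3 : ∑ x ∈ S.attach, (x : F) * ((x : F) ^ 2 ^ t) = 0 := by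
      have : ∑ x ∈ S.attach, (x : F) * (x : F) ^ 2 ^ t
          = ∑ x ∈ S, x ^ (2 ^ t + 1) := by
        rw [← Finset.sum_attach S (fun x => x ^ (2 ^ t + 1))]
        refine Finset.sum_congr rfl fun x _ => ?_
        rw [pow_add, pow_one, mul_comm]
      rw [this]
      exact hA t
    rw [← e3]
    refine Finset.sum_congr rfl fun x _ => ?_
    rw [e2 x]
  have hlam0 : ∀ j, lam j = 0 := moore n hn hq d B hBindF lam hlamrel
  -- hM
  have hM : ∀ j l : Fin d, ∑ x : {x // x ∈ S}, r x j * r x l = 0 := by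
    intro j l
    have h1' : ∑ x ∈ S.attach, r x j • (x : F) = 0 := hlam0 j
    have h2' : ∑ x ∈ S.attach, r x j • (x : F)
        = ∑ l', (∑ x ∈ S.attach, r x j * r x l') • B l' := by
      calc ∑ x ∈ S.attach, r x j • (x : F)
          = ∑ x ∈ S.attach, ∑ l', (r x j * r x l') • B l' := by
            refine Finset.sum_congr rfl fun x _ => ?_
            rw [hxrepr x, Finset.smul_sum]
            refine Finset.sum_congr rfl fun l' _ => ?_
            rw [smul_smul]
        _ = ∑ l', ∑ x ∈ S.attach, (r x j * r x l') • B l' := Finset.sum_comm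
        _ = ∑ l', (∑ x ∈ S.attach, r x j * r x l') • B l' := by
            refine Finset.sum_congr rfl fun l' _ => ?_
            rw [Finset.sum_smul]
    have hfin := hBindZ (fun l' => ∑ x ∈ S.attach, r x j * r x l') (by rw [← h2', h1']) l
    rw [Finset.univ_eq_attach]
    exact hfin
  -- apply lemF
  have hcardcoe : Fintype.card {x // x ∈ S} = S.card := Fintype.card_coe S
  have hrinj : Function.Injective r := by
    intro x y hxy
    have hco : (x : F) = (y : F) := by
      rw [hxrepr x, hxrepr y]
      exact Finset.sum_congr rfl fun j _ => by rw [hxy]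
    exact Subtype.ext hco
  have hrnz : ∀ x, r x ≠ 0 := by
    intro x hx0
    have hco : (x : F) = 0 := by
      rw [hxrepr x]
      rw [show (∑ j, r x j • B j) = ∑ j, (0 : ZMod 2) • B j from
        Finset.sum_congr rfl fun j _ => by rw [congrFun hx0 j]; rfl]
      simp
    apply h0S
    rw [← hco]
    exact x.2
  set inc : {x // x ∈ S} → V := fun x => ⟨x.1, hmemV x.1 x.2⟩ with hinc
  set e : V →ₗ[ZMod 2] (Fin d → ZMod 2) := b.equivFun.toLinearMap with he
  have hspan : Submodule.span (ZMod 2) (Set.range r) = ⊤ := by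
    have hVtop : Submodule.span (ZMod 2) (Set.range inc) = (⊤ : Submodule (ZMod 2) V) := by
      apply Submodule.map_injective_of_injective (Submodule.injective_subtype V)
      rw [Submodule.map_span, Submodule.map_top, Submodule.range_subtype]
      have himg : V.subtype '' Set.range inc = (S : Set F) := by
        ext y
        constructor
        · rintro ⟨v, ⟨x, rfl⟩, rfl⟩
          exact Finset.mem_coe.mpr x.2
        · intro hy
          exact ⟨inc ⟨y, hy⟩, ⟨⟨y, hy⟩, rfl⟩, rfl⟩
      rw [himg]
    have hre : r = ⇑e ∘ inc := by
      funext x j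
      rw [Function.comp_apply, he]
      rw [LinearEquiv.coe_toLinearMap]
      rw [Module.Basis.equivFun_apply]
    rw [hre, Set.range_comp, Submodule.span_image, hVtop, Submodule.map_top]
    rw [LinearMap.range_eq_top]
    exact b.equivFun.surjective
  exact lemF d {x // x ∈ S}
    (by rw [hcardcoe]; exact Finset.card_pos.mpr hne)
    (by rw [hcardcoe]; exact hcard)
    r hrinj hrnz hspan hM
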